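/- Fix a finite type σ over Ω, a countable ordinal ζ, a hereditarily monotone f ∈ Ω^mon_{σ→σ}, and x ∈ Ω^mon_σ. (1) If Iter_{ζ+1} f x ≥ Iter_ζ f x, then Iter_γ f x ≥ Iter_α f x for all countable ordinals γ > α ≥ ζ. (2) If Iter_{ζ+1} f x ≤ Iter_ζ f x, then Iter_γ f x ≤ Iter_α f x for all countable ordinals γ > α ≥ ζ. -/

import Mathlib

/-!  Framework: finite type structure over Ω = countable ordinals,
     limsup/liminf, transfinite iteration functionals, hereditarily
     positive and hereditarily monotone functionals. -/

noncomputable section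
namespace IterOrd

open Ordinal

theorem omega1_pos : (0 : Ordinal) < ω₁ := Ordinal.omega0_pos.trans Ordinal.omega0_lt_omega_one

/-- `Om` is Ω, the set of countable ordinals (ordinals `< ω₁`). -/
abbrev Om : Type 1 := {o : Ordinal // o < ω₁}

/-- Infimum of a subset of Ω (the minimum for nonempty sets; `0` for `∅`). -/
def infOm (s : Set Om) : Om :=
  ⟨sInf (Subtype.val '' s), by
    rcases (Subtype.val '' s).eq_empty_or_nonempty with h | h
    · rw [h]; simpa using omega1_pos
    · obtain ⟨x, _, he⟩ := csInf_mem h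
      exact he ▸ x.2⟩

/-- Supremum of a subset of Ω.  Whenever the supremum of the set exists in Ω
(in particular for every countable subset, by regularity of `ω₁`) this is the
genuine supremum; otherwise it takes a junk value. -/
def supOm (s : Set Om) : Om :=
  if h : sSup (Subtype.val '' s) < ω₁ then ⟨sSup (Subtype.val '' s), h⟩ else ⟨0, omega1_pos⟩

/-- Finite types over the base type `o` (interpreted as Ω). -/
inductive Ty : Type
  | base : Ty
  | arrow : Ty → Ty → Ty
deriving DecidableEq

/-- The full type structure over Ω: `El base = Ω` and
`El (arrow σ τ)` is the set of all functions `El σ → El τ`. -/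
@[reducible] def El : Ty → Type 1
  | .base => Om
  | .arrow σ τ => El σ → El τ

/-- The order on each `El σ`: the ordinal order at base type, pointwise at arrow types. -/
def Le : (σ : Ty) → El σ → El σ → Prop
  | .base => fun x y => x ≤ y
  | .arrow σ τ => fun f g => ∀ x : El σ, Le τ (f x) (g x)

/-- Suprema, computed pointwise at function types. -/
def supEl : (σ : Ty) → Set (El σ) → El σ
  | .base => supOm
  | .arrow σ τ => fun S (x : El σ) => supEl τ ((fun f : El (.arrow σ τ) => f x) '' S)

/-- Infima, computed pointwise at function types. -/
def infEl : (σ : Ty) → Set (El σ) → El σ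
  | .base => infOm
  | .arrow σ τ => fun S (x : El σ) => infEl τ ((fun f : El (.arrow σ τ) => f x) '' S)

/-- `limsup_{ξ→ζ} f ξ = inf_{γ<ζ} sup_{γ≤ξ<ζ} f ξ`. -/
def limsupEl (σ : Ty) (ζ : Ordinal) (f : ∀ ξ : Ordinal, ξ < ζ → El σ) : El σ :=
  infEl σ {y | ∃ γ, ∃ _ : γ < ζ, y = supEl σ {z | ∃ ξ, ∃ h : ξ < ζ, γ ≤ ξ ∧ z = f ξ h}}

/-- `liminf_{ξ→ζ} f ξ = sup_{γ<ζ} inf_{γ≤ξ<ζ} f ξ`. -/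
def liminfEl (σ : Ty) (ζ : Ordinal) (f : ∀ ξ : Ordinal, ξ < ζ → El σ) : El σ :=
  supEl σ {y | ∃ γ, ∃ _ : γ < ζ, y = infEl σ {z | ∃ ξ, ∃ h : ξ < ζ, γ ≤ ξ ∧ z = f ξ h}}

/-- `limsup` of a ζ-indexed sequence of ordinals. -/
def oLimsup (ζ : Ordinal) (a : Ordinal → Ordinal) : Ordinal :=
  sInf {s | ∃ γ, γ < ζ ∧ s = sSup (a '' {ξ | γ ≤ ξ ∧ ξ < ζ})}

/-- `liminf` of a ζ-indexed sequence of ordinals. -/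
def oLiminf (ζ : Ordinal) (a : Ordinal → Ordinal) : Ordinal :=
  sSup {s | ∃ γ, γ < ζ ∧ s = sInf (a '' {ξ | γ ≤ ξ ∧ ξ < ζ})}

/-- The α-iteration functional of type σ:
`Iter 0 f x = x`, `Iter (α+1) f x = f (Iter α f x)`, and
`Iter μ f x = limsup_{ξ→μ} Iter ξ f x` for limit μ. -/
def Iter (σ : Ty) (α : Ordinal) : (El σ → El σ) → El σ → El σ :=
  Ordinal.limitRecOn (motive := fun _ => (El σ → El σ) → El σ → El σ) α
    (fun _ x => x)
    (fun _ ih f x => f (ih f x))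
    (fun μ _ ih f x => limsupEl σ μ (fun ξ h => ih ξ h f x))

/-- The pair (hereditarily positive, ≤hp), defined simultaneously by recursion on the type.
Every element of `Ω` and of `Ω_{ρ→τ}` with `ρ ≠ τ` is h.p., and `≤hp` there is `≤`;
`f : Ω_{τ→τ}` is h.p. iff it preserves h.p., is inflationary on h.p. arguments and is
monotone (w.r.t. `≤hp`) on h.p. arguments; `f ≤hp f'` on `Ω_{τ→τ}` iff `f x ≤hp f' x`
for every h.p. `x`. -/
def HPaux : (σ : Ty) → (El σ → Prop) × (El σ → El σ → Prop)
  | .base => ⟨fun _ => True, fun x y => x ≤ y⟩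
  | .arrow ρ τ =>
      ⟨fun f =>
        if h : ρ = τ then
          (∀ x, (HPaux ρ).1 x → (HPaux τ).1 (f x)) ∧
          (∀ x, (HPaux ρ).1 x → (HPaux τ).2 (cast (congrArg El h) x) (f x)) ∧
          (∀ x y, (HPaux ρ).1 x → (HPaux ρ).1 y → (HPaux ρ).2 x y → (HPaux τ).2 (f x) (f y))
        else True,
       fun f g =>
        if ρ = τ then ∀ x, (HPaux ρ).1 x → (HPaux τ).2 (f x) (g x)
        else Le (.arrow ρ τ) f g⟩

/-- Hereditarily positive functionals. -/
def Hp (σ : Ty) : El σ → Prop := (HPaux σ).1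

/-- The order `≤hp`. -/
def HpLe (σ : Ty) : El σ → El σ → Prop := (HPaux σ).2

/-- `f =hp g` iff `f ≤hp g` and `g ≤hp f`. -/
def HpEq (σ : Ty) (f g : El σ) : Prop := HpLe σ f g ∧ HpLe σ g f

/-- The pair (hereditarily monotone, ≤ on the hereditarily monotone structure),
by recursion on the type.  `f` is hereditarily monotone iff it maps hereditarily
monotone arguments to hereditarily monotone values, monotonically; the order is
pointwise over hereditarily monotone arguments (i.e. the order of `Ω^mon`). -/
def HMaux : (σ : Ty) → (El σ → Prop) × (El σ → El σ → Prop)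
  | .base => ⟨fun _ => True, fun x y => x ≤ y⟩
  | .arrow σ τ =>
      ⟨fun f =>
        (∀ x, (HMaux σ).1 x → (HMaux τ).1 (f x)) ∧
        (∀ x y, (HMaux σ).1 x → (HMaux σ).1 y → (HMaux σ).2 x y → (HMaux τ).2 (f x) (f y)),
       fun f g => ∀ x, (HMaux σ).1 x → (HMaux τ).2 (f x) (g x)⟩

/-- Hereditarily monotone functionals: the members of the type structure `Ω^mon`. -/
def HM (σ : Ty) : El σ → Prop := (HMaux σ).1

/-- The (pointwise) order of the hereditarily monotone type structure `Ω^mon`. -/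
def LeHM (σ : Ty) : El σ → El σ → Prop := (HMaux σ).2

/-- Equality in the hereditarily monotone type structure `Ω^mon`. -/
def EqHM (σ : Ty) (f g : El σ) : Prop := LeHM σ f g ∧ LeHM σ g f
/-! ### Auxiliary lemmas -/

open Cardinal in
lemma csSup_lt_omega1 {S : Set Ordinal} (hS : S.Countable) (h : ∀ o ∈ S, o < ω₁) :
    sSup S < ω₁ := by
  rcases S.eq_empty_or_nonempty with rfl | hne
  · simpa using omega1_pos
  · obtain ⟨g, rfl⟩ := hS.exists_eq_range hne
    have : sSup (Set.range g) = iSup g := rfl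
    rw [this]
    exact Ordinal.iSup_lt_omega_one (fun n => h _ ⟨n, rfl⟩)

lemma le_supOm {S : Set Om} (hS : S.Countable) {a : Om} (ha : a ∈ S) : a ≤ supOm S := by
  have hlt : sSup (Subtype.val '' S) < ω₁ :=
    csSup_lt_omega1 (hS.image _) (by rintro o ⟨z, _, rfl⟩; exact z.2)
  rw [supOm, dif_pos hlt]
  show a.1 ≤ sSup (Subtype.val '' S)
  refine le_csSup ⟨ω₁, ?_⟩ ⟨a, ha, rfl⟩
  rintro o ⟨z, _, rfl⟩; exact z.2.le

lemma supOm_le {S : Set Om} {c : Om} (h : ∀ a ∈ S, a ≤ c) : supOm S ≤ c := by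
  rw [supOm]
  split
  · show sSup (Subtype.val '' S) ≤ c.1
    refine csSup_le' ?_
    rintro o ⟨z, hz, rfl⟩; exact h z hz
  · exact (zero_le : (0 : Ordinal) ≤ c.1)

lemma infOm_le {S : Set Om} {a : Om} (ha : a ∈ S) : infOm S ≤ a := by
  show sInf (Subtype.val '' S) ≤ a.1
  exact csInf_le (OrderBot.bddBelow _) ⟨a, ha, rfl⟩

lemma le_infOm {S : Set Om} (hne : S.Nonempty) {c : Om} (h : ∀ a ∈ S, c ≤ a) :
    c ≤ infOm S := by
  show c.1 ≤ sInf (Subtype.val '' S)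
  refine le_csInf (hne.image _) ?_
  rintro o ⟨z, hz, rfl⟩; exact h z hz

lemma leHM_refl (σ : Ty) : ∀ a : El σ, LeHM σ a a := by
  induction σ with
  | base => exact fun a => le_refl a
  | arrow σ τ ihσ ihτ => exact fun g y _ => ihτ (g y)

lemma leHM_trans (σ : Ty) : ∀ {a b c : El σ}, LeHM σ a b → LeHM σ b c → LeHM σ a c := by
  induction σ with
  | base => exact fun h1 h2 => le_trans h1 h2
  | arrow σ τ ihσ ihτ => exact fun h1 h2 y hy => ihτ (h1 y hy) (h2 y hy)

lemma le_supEl (σ : Ty) : ∀ (S : Set (El σ)), S.Countable → ∀ a ∈ S, LeHM σ a (supEl σ S) := by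
  induction σ with
  | base => exact fun S hS a ha => le_supOm hS ha
  | arrow σ τ ihσ ihτ =>
      intro S hS a ha y hy
      exact ihτ _ (hS.image _) _ ⟨a, ha, rfl⟩

lemma supEl_le (σ : Ty) : ∀ (S : Set (El σ)) (c : El σ),
    (∀ a ∈ S, LeHM σ a c) → LeHM σ (supEl σ S) c := by
  induction σ with
  | base => exact fun S c h => supOm_le h
  | arrow σ τ ihσ ihτ =>
      intro S c h y hy
      exact ihτ _ _ (by rintro b ⟨a, ha, rfl⟩; exact h a ha y hy)

lemma infEl_le (σ : Ty) : ∀ (S : Set (El σ)) (a : El σ), a ∈ S → LeHM σ (infEl σ S) a := by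
  induction σ with
  | base => exact fun S a ha => infOm_le ha
  | arrow σ τ ihσ ihτ =>
      intro S a ha y hy
      exact ihτ _ _ ⟨a, ha, rfl⟩

lemma le_infEl (σ : Ty) : ∀ (S : Set (El σ)), S.Nonempty → ∀ c : El σ,
    (∀ a ∈ S, LeHM σ c a) → LeHM σ c (infEl σ S) := by
  induction σ with
  | base => exact fun S hne c h => le_infOm hne h
  | arrow σ τ ihσ ihτ =>
      intro S hne c h y hy
      exact ihτ _ (hne.image _) _ (by rintro b ⟨a, ha, rfl⟩; exact h a ha y hy)

lemma hm_supEl (σ : Ty) : ∀ S : Set (El σ), S.Countable →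
    (∀ a ∈ S, HM σ a) → HM σ (supEl σ S) := by
  induction σ with
  | base => exact fun _ _ _ => trivial
  | arrow σ τ ihσ ihτ =>
      intro S hS hHM
      refine ⟨fun y hy => ihτ _ (hS.image _) ?_, fun y z hy hz hyz => ?_⟩
      · rintro b ⟨a, ha, rfl⟩; exact (hHM a ha).1 y hy
      · refine supEl_le τ _ _ ?_
        rintro b ⟨a, ha, rfl⟩
        exact leHM_trans τ ((hHM a ha).2 y z hy hz hyz)
          (le_supEl τ _ (hS.image _) _ ⟨a, ha, rfl⟩)

lemma hm_infEl (σ : Ty) : ∀ S : Set (El σ), S.Nonempty →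
    (∀ a ∈ S, HM σ a) → HM σ (infEl σ S) := by
  induction σ with
  | base => exact fun _ _ _ => trivial
  | arrow σ τ ihσ ihτ =>
      intro S hne hHM
      refine ⟨fun y hy => ihτ _ (hne.image _) ?_, fun y z hy hz hyz => ?_⟩
      · rintro b ⟨a, ha, rfl⟩; exact (hHM a ha).1 y hy
      · refine le_infEl τ _ (hne.image _) _ ?_
        rintro b ⟨a, ha, rfl⟩
        exact leHM_trans τ (infEl_le τ _ _ ⟨a, ha, rfl⟩) ((hHM a ha).2 y z hy hz hyz)

lemma iter_zero (σ : Ty) (f : El σ → El σ) (x : El σ) : Iter σ 0 f x = x := by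
  rw [Iter, Ordinal.limitRecOn_zero]

lemma iter_succ (σ : Ty) (α : Ordinal) (f : El σ → El σ) (x : El σ) :
    Iter σ (α + 1) f x = f (Iter σ α f x) := by
  rw [Iter, Ordinal.add_one_eq_succ, Ordinal.limitRecOn_succ]
  rfl

lemma iter_limit (σ : Ty) {μ : Ordinal} (hμ : Order.IsSuccLimit μ) (f : El σ → El σ) (x : El σ) :
    Iter σ μ f x = limsupEl σ μ (fun ξ _ => Iter σ ξ f x) := by
  rw [Iter, Ordinal.limitRecOn_limit _ _ _ _ hμ]
  rfl

lemma countable_Iio {μ : Ordinal} (hμ : μ < ω₁) : (Set.Iio μ).Countable := by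
  rw [Cardinal.countable_iff_lt_aleph_one, Ordinal.mk_Iio_ordinal, Cardinal.lift_lt_aleph_one]
  rw [← Cardinal.ord_aleph] at hμ
  exact Cardinal.lt_ord.1 hμ

lemma countable_tail (σ : Ty) {μ : Ordinal} (hμ : μ < ω₁) (g : Ordinal → El σ) (γ' : Ordinal) :
    {z | ∃ ξ, ∃ _ : ξ < μ, γ' ≤ ξ ∧ z = g ξ}.Countable := by
  refine Set.Countable.mono ?_ ((countable_Iio hμ).image g)
  rintro z ⟨ξ, hξ, _, rfl⟩
  exact ⟨ξ, hξ, rfl⟩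

lemma iter_hm (σ : Ty) (f : El σ → El σ) (hf : HM (.arrow σ σ) f) (x : El σ) (hx : HM σ x) :
    ∀ α, α < ω₁ → HM σ (Iter σ α f x) := by
  intro α
  induction α using Ordinal.induction with
  | h α ih =>
  intro hα
  rcases Ordinal.zero_or_succ_or_isSuccLimit α with rfl | ⟨β, rfl⟩ | hl
  · rw [iter_zero]; exact hx
  · rw [← Ordinal.add_one_eq_succ, iter_succ]
    exact hf.1 _ (ih β (Order.lt_succ β) ((Order.lt_succ β).trans hα))
  · rw [iter_limit σ hl, limsupEl]
    refine hm_infEl σ _ ⟨_, ⟨0, hl.pos, rfl⟩⟩ ?_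
    rintro y ⟨γ', hγ', rfl⟩
    refine hm_supEl σ _ (countable_tail σ hα _ _) ?_
    rintro z ⟨ξ, hξ, _, rfl⟩
    exact ih ξ hξ (hξ.trans hα)
lemma iter_le_of_step (σ : Ty) (ζ : Ordinal) (f : El σ → El σ) (hf : HM (.arrow σ σ) f)
    (x : El σ) (hx : HM σ x)
    (hstep : LeHM σ (Iter σ ζ f x) (Iter σ (ζ + 1) f x)) :
    ∀ γ, γ < ω₁ → ∀ α, ζ ≤ α → α ≤ γ → LeHM σ (Iter σ α f x) (Iter σ γ f x) := by
  intro γ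
  induction γ using Ordinal.induction with
  | h γ IH =>
  intro hγ α hζα hαγ
  rcases eq_or_lt_of_le hαγ with rfl | hαγ
  · exact leHM_refl σ _
  have key : ∀ μ, μ ≤ γ → Order.IsSuccLimit μ → μ < ω₁ → ∀ α', ζ ≤ α' → α' < μ →
      LeHM σ (Iter σ α' f x) (Iter σ μ f x) := by
    intro μ hμγ hμ hμω α' hζα' hα'μ
    rw [iter_limit σ hμ, limsupEl]
    refine le_infEl σ _ ?_ _ ?_
    · exact ⟨_, ⟨0, hμ.pos, rfl⟩⟩
    rintro y ⟨γ', hγ', rfl⟩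
    have hmax : max α' γ' < μ := max_lt hα'μ hγ'
    refine leHM_trans σ
      (IH (max α' γ') (hmax.trans_le hμγ) (hmax.trans hμω) α' hζα' (le_max_left _ _)) ?_
    exact le_supEl σ _ (countable_tail σ hμω _ _) _ ⟨max α' γ', hmax, le_max_right _ _, rfl⟩
  rcases Ordinal.zero_or_succ_or_isSuccLimit γ with rfl | ⟨δ, rfl⟩ | hl
  · exact absurd hαγ (not_lt_of_ge zero_le)
  · have hδω : δ < ω₁ := (Order.lt_succ δ).trans hγ
    have hαδ : α ≤ δ := Order.le_of_lt_succ hαγ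
    have hζδ : ζ ≤ δ := le_trans hζα hαδ
    have step : LeHM σ (Iter σ δ f x) (Iter σ (Order.succ δ) f x) := by
      rw [← Ordinal.add_one_eq_succ, iter_succ]
      rcases eq_or_lt_of_le hζδ with rfl | hζδ'
      · rw [iter_succ] at hstep; exact hstep
      · rcases Ordinal.zero_or_succ_or_isSuccLimit δ with rfl | ⟨ε, rfl⟩ | hδl
        · exact absurd hζδ' (not_lt_of_ge zero_le)
        · have e : Iter σ (Order.succ ε) f x = f (Iter σ ε f x) := by
            rw [← Ordinal.add_one_eq_succ, iter_succ]
          have h1 : LeHM σ (Iter σ ε f x) (Iter σ (Order.succ ε) f x) :=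
            IH (Order.succ ε) (Order.lt_succ _) hδω ε (Order.le_of_lt_succ hζδ')
              (Order.le_succ ε)
          rw [e] at h1 ⊢
          exact hf.2 _ _ (iter_hm σ f hf x hx ε ((Order.lt_succ ε).trans hδω))
            (hf.1 _ (iter_hm σ f hf x hx ε ((Order.lt_succ ε).trans hδω))) h1
        · have hIδ : ∀ ξ, ζ ≤ ξ → ξ < δ → LeHM σ (Iter σ ξ f x) (Iter σ δ f x) :=
            fun ξ h1 h2 => key δ (Order.le_succ δ) hδl hδω ξ h1 h2
          have h2 : LeHM σ (Iter σ δ f x)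
              (supEl σ {z | ∃ ξ, ∃ _ : ξ < δ, ζ ≤ ξ ∧ z = Iter σ ξ f x}) := by
            rw [iter_limit σ hδl, limsupEl]
            exact infEl_le σ _ _ ⟨ζ, hζδ', rfl⟩
          refine leHM_trans σ h2 (supEl_le σ _ _ ?_)
          rintro z ⟨ξ, hξδ, hζξ, rfl⟩
          have hξ1 : ξ + 1 < δ := by
            rw [Ordinal.add_one_eq_succ]; exact hδl.succ_lt hξδ
          have h3 : LeHM σ (Iter σ ξ f x) (Iter σ (ξ + 1) f x) :=
            IH (ξ + 1) (hξ1.trans (Order.lt_succ δ)) (hξ1.trans hδω) ξ hζξ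
              (by rw [Ordinal.add_one_eq_succ]; exact Order.le_succ ξ)
          rw [iter_succ] at h3
          exact leHM_trans σ h3 (hf.2 _ _ (iter_hm σ f hf x hx ξ (hξδ.trans hδω))
            (iter_hm σ f hf x hx δ hδω) (hIδ ξ hζξ hξδ))
    rcases eq_or_lt_of_le hαδ with rfl | hαδ'
    · exact step
    · exact leHM_trans σ (IH δ (Order.lt_succ δ) hδω α hζα hαδ) step
  · exact key γ le_rfl hl hγ α hζα hαγ

lemma iter_ge_of_step (σ : Ty) (ζ : Ordinal) (f : El σ → El σ) (hf : HM (.arrow σ σ) f)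
    (x : El σ) (hx : HM σ x)
    (hstep : LeHM σ (Iter σ (ζ + 1) f x) (Iter σ ζ f x)) :
    ∀ γ, γ < ω₁ → ∀ α, ζ ≤ α → α ≤ γ → LeHM σ (Iter σ γ f x) (Iter σ α f x) := by
  intro γ
  induction γ using Ordinal.induction with
  | h γ IH =>
  intro hγ α hζα hαγ
  rcases eq_or_lt_of_le hαγ with rfl | hαγ
  · exact leHM_refl σ _
  have key : ∀ μ, μ ≤ γ → Order.IsSuccLimit μ → μ < ω₁ → ∀ α', ζ ≤ α' → α' < μ →
      LeHM σ (Iter σ μ f x) (Iter σ α' f x) := by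
    intro μ hμγ hμ hμω α' hζα' hα'μ
    rw [iter_limit σ hμ, limsupEl]
    refine leHM_trans σ
      (infEl_le σ _ (supEl σ {z | ∃ ξ, ∃ _ : ξ < μ, α' ≤ ξ ∧ z = Iter σ ξ f x})
        ⟨α', hα'μ, rfl⟩) ?_
    refine supEl_le σ _ _ ?_
    rintro z ⟨ξ, hξμ, hα'ξ, rfl⟩
    exact IH ξ (hξμ.trans_le hμγ) (hξμ.trans hμω) α' hζα' hα'ξ
  rcases Ordinal.zero_or_succ_or_isSuccLimit γ with rfl | ⟨δ, rfl⟩ | hl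
  · exact absurd hαγ (not_lt_of_ge zero_le)
  · have hδω : δ < ω₁ := (Order.lt_succ δ).trans hγ
    have hαδ : α ≤ δ := Order.le_of_lt_succ hαγ
    have hζδ : ζ ≤ δ := le_trans hζα hαδ
    have step : LeHM σ (Iter σ (Order.succ δ) f x) (Iter σ δ f x) := by
      rw [← Ordinal.add_one_eq_succ, iter_succ]
      rcases eq_or_lt_of_le hζδ with rfl | hζδ'
      · rw [iter_succ] at hstep; exact hstep
      · rcases Ordinal.zero_or_succ_or_isSuccLimit δ with rfl | ⟨ε, rfl⟩ | hδl
        · exact absurd hζδ' (not_lt_of_ge zero_le)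
        · have e : Iter σ (Order.succ ε) f x = f (Iter σ ε f x) := by
            rw [← Ordinal.add_one_eq_succ, iter_succ]
          have h1 : LeHM σ (Iter σ (Order.succ ε) f x) (Iter σ ε f x) :=
            IH (Order.succ ε) (Order.lt_succ _) hδω ε (Order.le_of_lt_succ hζδ')
              (Order.le_succ ε)
          rw [e] at h1 ⊢
          exact hf.2 _ _ (hf.1 _ (iter_hm σ f hf x hx ε ((Order.lt_succ ε).trans hδω)))
            (iter_hm σ f hf x hx ε ((Order.lt_succ ε).trans hδω)) h1
        · -- δ limit, ζ < δ : show f (Iter δ) ≤ Iter δ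
          rw [iter_limit σ hδl, limsupEl]
          refine le_infEl σ _ ?_ _ ?_
          · exact ⟨_, ⟨0, hδl.pos, rfl⟩⟩
          rintro y ⟨γ', hγ', rfl⟩
          set ξ := max γ' ζ with hξdef
          have hξδ : ξ < δ := max_lt hγ' hζδ'
          have hξ1 : ξ + 1 < δ := by
            rw [Ordinal.add_one_eq_succ]; exact hδl.succ_lt hξδ
          refine leHM_trans σ ?_
            (le_supEl σ _ (countable_tail σ hδω _ _) _
              ⟨ξ + 1, hξ1, le_trans (le_max_left _ _)
                (by rw [Ordinal.add_one_eq_succ]; exact Order.le_succ ξ), rfl⟩)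
          rw [iter_succ]
          have hIδξ : LeHM σ (Iter σ δ f x) (Iter σ ξ f x) :=
            key δ (Order.le_succ δ) hδl hδω ξ (le_max_right _ _) hξδ
          have goal' : LeHM σ (f (Iter σ δ f x)) (f (Iter σ ξ f x)) :=
            hf.2 _ _ (iter_hm σ f hf x hx δ hδω) (iter_hm σ f hf x hx ξ (hξδ.trans hδω)) hIδξ
          rwa [iter_limit σ hδl, limsupEl] at goal'
    rcases eq_or_lt_of_le hαδ with rfl | hαδ'
    · exact step
    · exact leHM_trans σ step (IH δ (Order.lt_succ δ) hδω α hζα hαδ)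
  · exact key γ le_rfl hl hγ α hζα hαγ
/-- For hereditarily monotone `f ∈ Ω^mon_{σ→σ}` and `x ∈ Ω^mon_σ`:
(1) if `Iter_{ζ+1} f x ≥ Iter_ζ f x` then `Iter_γ f x ≥ Iter_α f x` for all countable
`γ > α ≥ ζ`; (2) if `Iter_{ζ+1} f x ≤ Iter_ζ f x` then `Iter_γ f x ≤ Iter_α f x`
for all countable `γ > α ≥ ζ`. -/
theorem iter_monotone_from_hm (σ : Ty) (ζ : Ordinal) (hζ : ζ < ω₁)
    (f : El σ → El σ) (hf : HM (.arrow σ σ) f) (x : El σ) (hx : HM σ x) :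
    (LeHM σ (Iter σ ζ f x) (Iter σ (ζ + 1) f x) →
      ∀ α γ, ζ ≤ α → α < γ → γ < ω₁ → LeHM σ (Iter σ α f x) (Iter σ γ f x)) ∧
    (LeHM σ (Iter σ (ζ + 1) f x) (Iter σ ζ f x) →
      ∀ α γ, ζ ≤ α → α < γ → γ < ω₁ → LeHM σ (Iter σ γ f x) (Iter σ α f x)) := by
  constructor
  · intro h α γ h1 h2 h3
    exact iter_le_of_step σ ζ f hf x hx h γ h3 α h1 h2.le
  · intro h α γ h1 h2 h3
    exact iter_ge_of_step σ ζ f hf x hx h γ h3 α h1 h2.le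

end IterOrd
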